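/- For all natural numbers n, m, k: S_{s,q}[n+m, k] = Σ_{r=0}^{n} Σ_{j=0}^{m} S_{s,q}[m,j] · q^{(j(1−s)+sm)(k−j)} · binom(r, k−j)_{q^{s−1}} · S_{s,q}[n,r] · Π_{i=0}^{r−k+j−1} [j(1−s) + sm + i·(s−1)]_q, where binom(r, k−j) is interpreted as 0 when j > k and the exponent k − j is computed in ℤ. (Generalized Spivey convolution, second form.) -/

import Mathlib

/-- The `q`-bracket `[t]_q = (q^t - 1)/(q - 1)` (real exponentiation). -/
noncomputable def qBracket (q t : ℝ) : ℝ := (q ^ t - 1) / (q - 1)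

open Classical in
/-- The `Q`-binomial coefficient: the sum of `Q^(t₁+⋯+t_{n-k})` over all weakly
increasing integer tuples `0 ≤ t₁ ≤ ⋯ ≤ t_{n-k} ≤ k` when `k ≤ n`, and `0` when `k > n`. -/
noncomputable def qBinom (Q : ℝ) (n k : ℕ) : ℝ :=
  if k ≤ n then
    ∑ f ∈ Finset.univ.filter (fun f : Fin (n - k) → Fin (k + 1) => Monotone f),
      Q ^ (∑ i, (f i : ℕ))
  else 0

/-- The generalized `q`-Stirling numbers `S_{s,q}[n,k]` of Goldman–Haglund type. -/
noncomputable def genStirling (s q : ℝ) : ℕ → ℕ → ℝ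
  | 0, 0 => 1
  | 0, _ + 1 => 0
  | _ + 1, 0 => 0
  | n + 1, k + 1 =>
    if k + 1 ≤ n + 1 then
      q ^ (s * (n : ℝ) - (s - 1) * (k : ℝ)) * genStirling s q n k
        + qBracket q (s * (n : ℝ) - (s - 1) * ((k : ℝ) + 1)) * genStirling s q n (k + 1)
    else 0

lemma qBracket_zero (q : ℝ) : qBracket q 0 = 0 := by
  simp [qBracket]

lemma qBracket_add {q : ℝ} (hq : 0 < q) (hq1 : q ≠ 1) (x y : ℝ) :
    qBracket q (x + y) = qBracket q x + q ^ x * qBracket q y := by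
  have h : q - 1 ≠ 0 := sub_ne_zero.mpr hq1
  unfold qBracket
  rw [Real.rpow_add hq]
  field_simp
  ring

open Classical in
noncomputable def qb (Q : ℝ) (d c : ℕ) : ℝ :=
  ∑ f ∈ Finset.univ.filter (fun f : Fin d → Fin (c + 1) => Monotone f),
    Q ^ (∑ i, (f i : ℕ))

lemma qb_zero_left (Q : ℝ) (c : ℕ) : qb Q 0 c = 1 := by
  rw [qb]
  have h1 : Finset.univ.filter (fun f : Fin 0 → Fin (c + 1) => Monotone f) = Finset.univ :=
    Finset.filter_true_of_mem (fun f _ => fun a b _ => a.elim0)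
  rw [h1]
  rw [Finset.sum_congr rfl (fun f _ => by simp : ∀ f ∈ (Finset.univ : Finset (Fin 0 → Fin (c+1))), Q ^ (∑ i, (f i : ℕ)) = 1)]
  simp

lemma qb_zero_right (Q : ℝ) (d : ℕ) : qb Q d 0 = 1 := by
  rw [qb]
  have h1 : Finset.univ.filter (fun f : Fin d → Fin (0 + 1) => Monotone f) = Finset.univ :=
    Finset.filter_true_of_mem (fun f _ => fun a b _ => by rw [Fin.le_def]; omega)
  rw [h1]
  rw [Finset.sum_congr rfl (fun f _ => by
      have : ∀ i, (f i : ℕ) = 0 := fun i => by omega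
      simp [this]
    : ∀ f ∈ (Finset.univ : Finset (Fin d → Fin (0+1))), Q ^ (∑ i, (f i : ℕ)) = 1)]
  simp [Finset.card_univ]

lemma monotone_cons_zero {d c : ℕ} {g : Fin d → Fin (c + 2)} (hg : Monotone g) :
    Monotone (Fin.cons 0 g : Fin (d+1) → Fin (c+2)) := by
  intro a b hab
  induction a using Fin.cases with
  | zero => simp [Fin.cons_zero, Fin.zero_le]
  | succ i =>
    induction b using Fin.cases with
    | zero =>
      exact absurd (le_antisymm hab (Fin.zero_le _)) (Fin.succ_ne_zero i)
    | succ j =>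
      rw [Fin.cons_succ, Fin.cons_succ]
      exact hg (by rwa [Fin.succ_le_succ_iff] at hab)

lemma qb_pascal (Q : ℝ) (d c : ℕ) :
    qb Q (d + 1) (c + 1) = qb Q d (c + 1) + Q ^ (d + 1) * qb Q (d + 1) c := by
  classical
  rw [qb, qb, qb]
  rw [← Finset.sum_filter_add_sum_filter_not
    (Finset.univ.filter (fun f : Fin (d+1) → Fin (c+2) => Monotone f)) (fun f => f 0 = 0)]
  congr 1
  · rw [Finset.filter_filter]
    refine Finset.sum_nbij' (fun f => Fin.tail f) (fun g => Fin.cons 0 g) ?_ ?_ ?_ ?_ ?_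
    · intro f hf
      simp only [Finset.mem_filter, Finset.mem_univ, true_and] at hf ⊢
      exact hf.1.comp (Fin.strictMono_succ.monotone)
    · intro g hg
      simp only [Finset.mem_filter, Finset.mem_univ, true_and] at hg ⊢
      exact ⟨monotone_cons_zero hg, Fin.cons_zero _ _⟩
    · intro f hf
      simp only [Finset.mem_filter, Finset.mem_univ, true_and] at hf
      rw [← hf.2]
      exact Fin.cons_self_tail f
    · intro g hg
      funext x
      simp [Fin.tail, Fin.cons_succ]
    · intro f hf
      simp only [Finset.mem_filter, Finset.mem_univ, true_and] at hf
      congr 1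
      rw [Fin.sum_univ_succ]
      have : (f 0 : ℕ) = 0 := by rw [hf.2]; rfl
      rw [this, zero_add]
      rfl
  · rw [Finset.filter_filter, Finset.mul_sum]
    refine Finset.sum_nbij' (fun f x => (⟨(f x : ℕ) - 1, by omega⟩ : Fin (c+1)))
      (fun g x => (g x).succ) ?_ ?_ ?_ ?_ ?_
    · intro f hf
      simp only [Finset.mem_filter, Finset.mem_univ, true_and] at hf ⊢
      intro a b hab
      have := hf.1 hab
      rw [Fin.le_def] at this ⊢
      simp only
      omega
    · intro g hg
      simp only [Finset.mem_filter, Finset.mem_univ, true_and] at hg ⊢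
      constructor
      · intro a b hab
        have := hg hab
        rw [Fin.le_def] at this ⊢
        simp only [Fin.val_succ]
        omega
      · exact Fin.succ_ne_zero _
    · intro f hf
      simp only [Finset.mem_filter, Finset.mem_univ, true_and] at hf
      have h0 : 1 ≤ (f 0 : ℕ) := by
        have : (f 0 : ℕ) ≠ 0 := fun h => hf.2 (Fin.ext h)
        omega
      funext x
      have hx : 1 ≤ (f x : ℕ) := le_trans h0 (hf.1 (Fin.zero_le x))
      apply Fin.ext
      simp only [Fin.val_succ]
      omega
    · intro g hg
      funext x
      apply Fin.ext
      simp only [Fin.val_succ]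
      omega
    · intro f hf
      simp only [Finset.mem_filter, Finset.mem_univ, true_and] at hf
      have h0 : 1 ≤ (f 0 : ℕ) := by
        have : (f 0 : ℕ) ≠ 0 := fun h => hf.2 (Fin.ext h)
        omega
      have hsum : ∑ x, (f x : ℕ) = (d + 1) + ∑ x, ((f x : ℕ) - 1) := by
        have : ∀ x : Fin (d+1), (f x : ℕ) = ((f x : ℕ) - 1) + 1 := by
          intro x
          have hx : 1 ≤ (f x : ℕ) := le_trans h0 (hf.1 (Fin.zero_le x))
          omega
        rw [Finset.sum_congr rfl (fun x _ => this x), Finset.sum_add_distrib]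
        simp [Finset.card_univ, add_comm]
      rw [hsum, pow_add]

lemma qBinom_eq_qb (Q : ℝ) {n k : ℕ} (h : k ≤ n) : qBinom Q n k = qb Q (n - k) k := by
  rw [qBinom, if_pos h, qb]

lemma qBinom_eq_zero (Q : ℝ) {n k : ℕ} (h : n < k) : qBinom Q n k = 0 := by
  rw [qBinom, if_neg (by omega)]

lemma qBinom_zero_right (Q : ℝ) (n : ℕ) : qBinom Q n 0 = 1 := by
  rw [qBinom_eq_qb Q (Nat.zero_le n), qb_zero_right]

lemma qBinom_self (Q : ℝ) (n : ℕ) : qBinom Q n n = 1 := by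
  rw [qBinom_eq_qb Q le_rfl, Nat.sub_self, qb_zero_left]

lemma qBinom_pascal (Q : ℝ) {r t : ℕ} (h1 : 1 ≤ t) (h2 : t ≤ r) :
    qBinom Q (r + 1) t = qBinom Q r t + Q ^ (r + 1 - t) * qBinom Q r (t - 1) := by
  obtain ⟨u, rfl⟩ : ∃ u, t = u + 1 := ⟨t - 1, by omega⟩
  rw [qBinom_eq_qb Q (by omega : u + 1 ≤ r + 1), qBinom_eq_qb Q (by omega : u + 1 ≤ r),
    (by omega : u + 1 - 1 = u), qBinom_eq_qb Q (by omega : u ≤ r)]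
  have e1 : r + 1 - (u + 1) = (r - u - 1) + 1 := by omega
  have e2 : r - (u + 1) = r - u - 1 := by omega
  have e3 : r - u = (r - u - 1) + 1 := by omega
  rw [e1, e2, e3, qb_pascal]
  norm_num

-- genStirling lemmas
lemma genStirling_succ_zero (s q : ℝ) (n : ℕ) : genStirling s q (n + 1) 0 = 0 := by
  rw [genStirling]

lemma genStirling_zero_succ (s q : ℝ) (k : ℕ) : genStirling s q 0 (k + 1) = 0 := by
  rw [genStirling]

lemma genStirling_eq_zero (s q : ℝ) {n k : ℕ} (h : n < k) : genStirling s q n k = 0 := by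
  induction n generalizing k with
  | zero =>
    obtain ⟨u, rfl⟩ : ∃ u, k = u + 1 := ⟨k - 1, by omega⟩
    exact genStirling_zero_succ s q u
  | succ n ih =>
    obtain ⟨u, rfl⟩ : ∃ u, k = u + 1 := ⟨k - 1, by omega⟩
    rw [genStirling, if_neg (by omega)]

lemma genStirling_rec (s q : ℝ) (n k : ℕ) :
    genStirling s q (n + 1) (k + 1)
      = q ^ (s * (n : ℝ) - (s - 1) * (k : ℝ)) * genStirling s q n k
        + qBracket q (s * (n : ℝ) - (s - 1) * ((k : ℝ) + 1)) * genStirling s q n (k + 1) := by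
  rw [genStirling]
  by_cases h : k + 1 ≤ n + 1
  · rw [if_pos h]
  · rw [if_neg h, genStirling_eq_zero s q (by omega : n < k),
      genStirling_eq_zero s q (by omega : n < k + 1)]
    ring

lemma genStirling_zero_zero (s q : ℝ) : genStirling s q 0 0 = 1 := by
  rw [genStirling]

noncomputable def sTerm (q s : ℝ) (m n k r j : ℕ) : ℝ :=
  genStirling s q m j *
    q ^ (((j : ℝ) * (1 - s) + s * (m : ℝ)) * ((k : ℝ) - (j : ℝ))) *
    (if j ≤ k then qBinom (q ^ (s - 1)) r (k - j) else 0) *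
    genStirling s q n r *
    ∏ i ∈ Finset.range (r + j - k),
      qBracket q ((j : ℝ) * (1 - s) + s * (m : ℝ) + (i : ℝ) * (s - 1))

noncomputable def e1Term (q s : ℝ) (m n k r j : ℕ) : ℝ :=
  genStirling s q m j *
    q ^ (((j : ℝ) * (1 - s) + s * (m : ℝ)) * ((k : ℝ) - (j : ℝ))) *
    (if j ≤ k then qBinom (q ^ (s - 1)) (r + 1) (k - j) else 0) *
    (q ^ (s * (n : ℝ) - (s - 1) * (r : ℝ)) * genStirling s q n r) *
    ∏ i ∈ Finset.range (r + 1 + j - k),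
      qBracket q ((j : ℝ) * (1 - s) + s * (m : ℝ) + (i : ℝ) * (s - 1))

noncomputable def e2Term (q s : ℝ) (m n k r j : ℕ) : ℝ :=
  genStirling s q m j *
    q ^ (((j : ℝ) * (1 - s) + s * (m : ℝ)) * ((k : ℝ) - (j : ℝ))) *
    (if j ≤ k then qBinom (q ^ (s - 1)) r (k - j) else 0) *
    (qBracket q (s * (n : ℝ) - (s - 1) * (r : ℝ)) * genStirling s q n r) *
    ∏ i ∈ Finset.range (r + j - k),
      qBracket q ((j : ℝ) * (1 - s) + s * (m : ℝ) + (i : ℝ) * (s - 1))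

lemma sTerm_expand (q s : ℝ) (m n k r j : ℕ) :
    sTerm q s m (n + 1) k (r + 1) j
      = e1Term q s m n k r j + e2Term q s m n k (r + 1) j := by
  simp only [sTerm, e1Term, e2Term]
  rw [genStirling_rec]
  push_cast
  ring

lemma key_identity {q : ℝ} (s : ℝ) (hq : 0 < q) (hq1 : q ≠ 1) (m n r j k' : ℕ) :
    q ^ (s * ((n + m : ℕ) : ℝ) - (s - 1) * (k' : ℝ)) * sTerm q s m n k' r j
      + qBracket q (s * ((n + m : ℕ) : ℝ) - (s - 1) * ((k' : ℝ) + 1)) * sTerm q s m n (k' + 1) r j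
    = e1Term q s m n (k' + 1) r j + e2Term q s m n (k' + 1) r j := by
  simp only [sTerm, e1Term, e2Term, Nat.cast_add, Nat.cast_one]
  by_cases hjk : j ≤ k' + 1
  · by_cases hjk' : j ≤ k'
    · -- j ≤ k', set u = k' - j
      obtain ⟨u, hu⟩ : ∃ u, k' - j = u := ⟨k' - j, rfl⟩
      have huj : k' = j + u := by omega
      have hkj : k' + 1 - j = u + 1 := by omega
      have hkc : (k' : ℝ) = (j : ℝ) + (u : ℝ) := by exact_mod_cast congrArg Nat.cast huj
      simp only [if_pos hjk, if_pos hjk', hu, hkj]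
      rcases lt_trichotomy r u with hr | hr | hr
      · -- u > r : all binomials vanish
        rw [qBinom_eq_zero _ (by omega : r < u + 1), qBinom_eq_zero _ (by omega : r + 1 < u + 1),
          qBinom_eq_zero _ (by omega : r < u)]
        ring
      · -- u = r : t = r + 1
        subst hr
        rw [qBinom_eq_zero _ (by omega : r < r + 1)]
        simp only [qBinom_self]
        have h1 : r + j - k' = 0 := by omega
        have h2 : r + j - (k' + 1) = 0 := by omega
        have h3 : r + 1 + j - (k' + 1) = 0 := by omega
        rw [h1, h2, h3]
        simp only [Finset.range_zero, Finset.prod_empty]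
        have hexp : q ^ (s * ((n : ℝ) + (m : ℝ)) - (s - 1) * (k' : ℝ))
              * q ^ (((j : ℝ) * (1 - s) + s * (m : ℝ)) * ((k' : ℝ) - (j : ℝ)))
            = q ^ (((j : ℝ) * (1 - s) + s * (m : ℝ)) * (((k' : ℝ) + 1) - (j : ℝ)))
              * q ^ (s * (n : ℝ) - (s - 1) * (r : ℝ)) := by
          rw [← Real.rpow_add hq, ← Real.rpow_add hq]
          congr 1
          rw [hkc]
          ring
        linear_combination (genStirling s q m j * genStirling s q n r) * hexp
      · -- u < r : Pascal case
        rw [qBinom_pascal (q ^ (s - 1)) (by omega : 1 ≤ u + 1) (by omega : u + 1 ≤ r)]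
        have hsup : u + 1 - 1 = u := by omega
        rw [hsup]
        obtain ⟨v, hv⟩ : ∃ v, r + j - (k' + 1) = v := ⟨_, rfl⟩
        have hv1 : r + j - k' = v + 1 := by omega
        have hv2 : r + 1 + j - (k' + 1) = v + 1 := by omega
        rw [hv, hv1, hv2, Finset.prod_range_succ]
        have hvr : (v : ℝ) = (r : ℝ) - (u : ℝ) - 1 := by
          have h5 : v + (u + 1) = r := by omega
          have := congrArg (Nat.cast : ℕ → ℝ) h5
          push_cast at this
          linarith
        have hQpow : (q ^ (s - 1)) ^ (r + 1 - (u + 1)) = q ^ ((s - 1) * ((r : ℝ) - (u : ℝ))) := by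
          have hru : r + 1 - (u + 1) = r - u := by omega
          rw [hru, ← Real.rpow_natCast (q ^ (s - 1)) (r - u), ← Real.rpow_mul hq.le,
            Nat.cast_sub (by omega : u ≤ r)]
        have hexp : q ^ (s * ((n : ℝ) + (m : ℝ)) - (s - 1) * (k' : ℝ))
              * q ^ (((j : ℝ) * (1 - s) + s * (m : ℝ)) * ((k' : ℝ) - (j : ℝ)))
            = q ^ (((j : ℝ) * (1 - s) + s * (m : ℝ)) * (((k' : ℝ) + 1) - (j : ℝ)))
              * (q ^ (s - 1)) ^ (r + 1 - (u + 1))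
              * q ^ (s * (n : ℝ) - (s - 1) * (r : ℝ)) := by
          rw [hQpow, ← Real.rpow_add hq, ← Real.rpow_add hq, ← Real.rpow_add hq]
          congr 1
          rw [hkc]
          ring
        have hbr : qBracket q (s * ((n : ℝ) + (m : ℝ)) - (s - 1) * ((k' : ℝ) + 1))
            = qBracket q (s * (n : ℝ) - (s - 1) * (r : ℝ))
              + q ^ (s * (n : ℝ) - (s - 1) * (r : ℝ))
                * qBracket q ((j : ℝ) * (1 - s) + s * (m : ℝ) + (v : ℝ) * (s - 1)) := by
          rw [← qBracket_add hq hq1]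
          congr 1
          rw [hkc, hvr]
          ring
        linear_combination
          (genStirling s q m j * genStirling s q n r * qBinom (q ^ (s - 1)) r u
            * (∏ i ∈ Finset.range v,
                qBracket q ((j : ℝ) * (1 - s) + s * (m : ℝ) + (i : ℝ) * (s - 1)))
            * qBracket q ((j : ℝ) * (1 - s) + s * (m : ℝ) + (v : ℝ) * (s - 1))) * hexp
          + (genStirling s q m j * genStirling s q n r
              * q ^ (((j : ℝ) * (1 - s) + s * (m : ℝ)) * (((k' : ℝ) + 1) - (j : ℝ)))
              * qBinom (q ^ (s - 1)) r (u + 1)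
              * (∏ i ∈ Finset.range v,
                  qBracket q ((j : ℝ) * (1 - s) + s * (m : ℝ) + (i : ℝ) * (s - 1)))) * hbr
    · -- j = k' + 1
      have hj : j = k' + 1 := by omega
      subst hj
      simp only [if_neg hjk', if_pos hjk, Nat.sub_self, qBinom_zero_right, Nat.cast_add,
        Nat.cast_one, sub_self, mul_zero, Real.rpow_zero]
      have h3 : r + (k' + 1) - (k' + 1) = r := by omega
      have h4 : r + 1 + (k' + 1) - (k' + 1) = r + 1 := by omega
      rw [h3, h4, Finset.prod_range_succ]
      have hbr : qBracket q (s * ((n : ℝ) + (m : ℝ)) - (s - 1) * ((k' : ℝ) + 1))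
          = qBracket q (s * (n : ℝ) - (s - 1) * (r : ℝ))
            + q ^ (s * (n : ℝ) - (s - 1) * (r : ℝ))
              * qBracket q (((k' : ℝ) + 1) * (1 - s) + s * (m : ℝ) + (r : ℝ) * (s - 1)) := by
        rw [← qBracket_add hq hq1]
        congr 1
        ring
      linear_combination (genStirling s q m (k' + 1) * genStirling s q n r
        * ∏ i ∈ Finset.range r,
            qBracket q (((k' : ℝ) + 1) * (1 - s) + s * (m : ℝ) + (i : ℝ) * (s - 1))) * hbr
  · -- j > k' + 1
    simp only [if_neg hjk, if_neg (by omega : ¬ j ≤ k')]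
    ring

theorem spivey_aux (q s : ℝ) (hq : 0 < q) (hq1 : q ≠ 1) (m : ℕ) :
    ∀ n k, genStirling s q (n + m) k
      = ∑ r ∈ Finset.range (n + 1), ∑ j ∈ Finset.range (m + 1), sTerm q s m n k r j := by
  intro n
  induction n with
  | zero =>
    intro k
    rw [Nat.zero_add, Finset.sum_range_one]
    have hterm : ∀ j ∈ Finset.range (m + 1),
        sTerm q s m 0 k 0 j = if j = k then genStirling s q m k else 0 := by
      intro j _
      by_cases hjk : j = k
      · subst hjk
        rw [if_pos rfl]
        simp only [sTerm]
        rw [if_pos le_rfl, Nat.sub_self, qBinom_zero_right, sub_self, mul_zero,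
          Real.rpow_zero, genStirling_zero_zero, (by omega : 0 + j - j = 0)]
        simp
      · rw [if_neg hjk]
        simp only [sTerm]
        by_cases hle : j ≤ k
        · rw [if_pos hle, qBinom_eq_zero _ (by omega : 0 < k - j)]
          ring
        · rw [if_neg hle]
          ring
    rw [Finset.sum_congr rfl hterm, Finset.sum_ite_eq' (Finset.range (m + 1)) k
      (fun _ => genStirling s q m k)]
    by_cases hkm : k ≤ m
    · rw [if_pos (Finset.mem_range.mpr (by omega))]
    · rw [if_neg (fun h => hkm (by simpa using Nat.lt_succ_iff.mp (Finset.mem_range.mp h)))]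
      exact genStirling_eq_zero s q (by omega)
  | succ n ih =>
    intro k
    have hL : n + 1 + m = (n + m) + 1 := by omega
    rcases k with _ | k'
    · rw [hL, genStirling_succ_zero]
      symm
      apply Finset.sum_eq_zero
      intro r _
      apply Finset.sum_eq_zero
      intro j _
      simp only [sTerm]
      rcases Nat.eq_zero_or_pos j with hj0 | hj0
      · subst hj0
        rcases m with _ | m'
        · rcases r with _ | r'
          · rw [genStirling_succ_zero]
            ring
          · have hmem : 0 ∈ Finset.range (r' + 1 + 0 - 0) := Finset.mem_range.mpr (by omega)
            have h0 : qBracket q (((0 : ℕ) : ℝ) * (1 - s) + s * ((0 : ℕ) : ℝ)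
                + ((0 : ℕ) : ℝ) * (s - 1)) = 0 := by
              norm_num [qBracket_zero]
            rw [Finset.prod_eq_zero hmem h0]
            ring
        · rw [genStirling_succ_zero]
          ring
      · rw [if_neg (by omega : ¬ j ≤ 0)]
        ring
    · rw [hL, genStirling_rec, ih k', ih (k' + 1)]
      have h0 : ∑ j ∈ Finset.range (m + 1), sTerm q s m (n + 1) (k' + 1) 0 j = 0 := by
        apply Finset.sum_eq_zero
        intro j _
        simp only [sTerm, genStirling_succ_zero]
        ring
      have e0 : ∑ j ∈ Finset.range (m + 1), e2Term q s m n (k' + 1) 0 j = 0 := by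
        apply Finset.sum_eq_zero
        intro j _
        simp only [e2Term]
        cases n with
        | zero =>
          have hz : qBracket q (s * ((0 : ℕ) : ℝ) - (s - 1) * ((0 : ℕ) : ℝ)) = 0 := by
            norm_num [qBracket_zero]
          rw [hz]
          ring
        | succ n'' =>
          rw [genStirling_succ_zero]
          ring
      have eTop : ∑ j ∈ Finset.range (m + 1), e2Term q s m n (k' + 1) (n + 1) j = 0 := by
        apply Finset.sum_eq_zero
        intro j _
        simp only [e2Term]
        rw [genStirling_eq_zero s q (by omega : n < n + 1)]
        ring
      have hshift : ∑ r ∈ Finset.range (n + 1), ∑ j ∈ Finset.range (m + 1),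
            e2Term q s m n (k' + 1) (r + 1) j
          = ∑ r ∈ Finset.range (n + 1), ∑ j ∈ Finset.range (m + 1),
            e2Term q s m n (k' + 1) r j := by
        have hA := Finset.sum_range_succ'
          (fun r => ∑ j ∈ Finset.range (m + 1), e2Term q s m n (k' + 1) r j) (n + 1)
        have hB := Finset.sum_range_succ
          (fun r => ∑ j ∈ Finset.range (m + 1), e2Term q s m n (k' + 1) r j) (n + 1)
        rw [e0, add_zero] at hA
        rw [eTop, add_zero] at hB
        rw [← hA, hB]
      have step1 : ∑ r ∈ Finset.range (n + 1 + 1), ∑ j ∈ Finset.range (m + 1),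
            sTerm q s m (n + 1) (k' + 1) r j
          = ∑ r ∈ Finset.range (n + 1), ∑ j ∈ Finset.range (m + 1),
            (e1Term q s m n (k' + 1) r j + e2Term q s m n (k' + 1) r j) := by
        rw [Finset.sum_range_succ'
          (fun r => ∑ j ∈ Finset.range (m + 1), sTerm q s m (n + 1) (k' + 1) r j) (n + 1)]
        rw [h0, add_zero]
        have hmid : ∀ r ∈ Finset.range (n + 1),
            ∑ j ∈ Finset.range (m + 1), sTerm q s m (n + 1) (k' + 1) (r + 1) j
              = ∑ j ∈ Finset.range (m + 1), e1Term q s m n (k' + 1) r j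
                + ∑ j ∈ Finset.range (m + 1), e2Term q s m n (k' + 1) (r + 1) j := by
          intro r _
          rw [Finset.sum_congr rfl (fun j _ => sTerm_expand q s m n (k' + 1) r j),
            Finset.sum_add_distrib]
        rw [Finset.sum_congr rfl hmid, Finset.sum_add_distrib, hshift,
          ← Finset.sum_add_distrib]
        exact Finset.sum_congr rfl fun r _ => (Finset.sum_add_distrib).symm
      rw [step1, Finset.mul_sum, Finset.mul_sum, ← Finset.sum_add_distrib]
      refine Finset.sum_congr rfl fun r _ => ?_
      rw [Finset.mul_sum, Finset.mul_sum, ← Finset.sum_add_distrib]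
      exact Finset.sum_congr rfl fun j _ => key_identity s hq hq1 m n r j k'

/-- Generalized Spivey convolution identity, second form. -/
theorem spivey_convolution_second (q s : ℝ) (hq : 0 < q) (hq1 : q ≠ 1) (n m k : ℕ) :
    genStirling s q (n + m) k
    = ∑ r ∈ Finset.range (n + 1), ∑ j ∈ Finset.range (m + 1),
        genStirling s q m j *
          q ^ (((j : ℝ) * (1 - s) + s * (m : ℝ)) * ((k : ℝ) - (j : ℝ))) *
          (if j ≤ k then qBinom (q ^ (s - 1)) r (k - j) else 0) *
          genStirling s q n r *
          ∏ i ∈ Finset.range (r + j - k),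
            qBracket q ((j : ℝ) * (1 - s) + s * (m : ℝ) + (i : ℝ) * (s - 1)) := by
  simpa only [sTerm] using spivey_aux q s hq hq1 m n k
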